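/- Suppose that under P^{⊗2} the number of intersections N_∞ = Σ_{t≥1} 1{ω_t = ω̃_t} of two independent copies of the walk is almost surely finite, and that there exist a_n > 0, b_n ∈ ℝ^d and a probability measure ν on ℝ^d such that (ω_n − b_n)/a_n converges in distribution to ν. Then under P^{⊗2} the triple (N_n, (ω_n − b_n)/a_n, (ω̃_n − b_n)/a_n) converges in distribution, as n → ∞, to a triple (N, S, S̃) of independent random variables, where N has the law of N_∞ and S, S̃ each have law ν. -/

import Mathlib

open MeasureTheory ProbabilityTheory Filter Finset
open scoped ENNReal NNReal Topology

namespace StablePolymer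

variable {d : ℕ} {ΩW Ωe : Type*} [MeasurableSpace ΩW] [MeasurableSpace Ωe]

/-- `ω` is a random walk on `ℤ^d` started at the origin, with i.i.d. increments of law `q`. -/
structure IsRandomWalk (P : Measure ΩW) (ω : ℕ → ΩW → (Fin d → ℤ))
    (q : (Fin d → ℤ) → ℝ) : Prop where
  meas : ∀ n, Measurable (ω n)
  zero : ∀ x, ω 0 x = 0
  indep : iIndepFun (fun n x => ω (n + 1) x - ω n x) P
  law : ∀ n a, P {x | ω (n + 1) x - ω n x = a} = ENNReal.ofReal (q a)

/-- `η` is an i.i.d. environment, non-constant, with finite exponential moments. -/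
structure IsEnvironment (Q : Measure Ωe) (η : ℕ → (Fin d → ℤ) → Ωe → ℝ) : Prop where
  meas : ∀ n a, Measurable (η n a)
  indep : iIndepFun (fun p : ℕ × (Fin d → ℤ) => η p.1 p.2) Q
  ident : ∀ n a, Q.map (η n a) = Q.map (η 1 0)
  nonconst : ¬ ∃ c : ℝ, ∀ᵐ y ∂Q, η 1 0 y = c
  expMoment : ∀ b : ℝ, Integrable (fun y => Real.exp (b * η 1 0 y)) Q

/-- The logarithmic moment generating function `λ(β)` of the environment. -/
noncomputable def lam (Q : Measure Ωe) (η : ℕ → (Fin d → ℤ) → Ωe → ℝ) (b : ℝ) : ℝ :=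
  Real.log (∫ y, Real.exp (b * η 1 0 y) ∂Q)

/-- The partition function `Z_n`. -/
noncomputable def Zn (P : Measure ΩW) (ω : ℕ → ΩW → (Fin d → ℤ))
    (η : ℕ → (Fin d → ℤ) → Ωe → ℝ) (b : ℝ) (n : ℕ) (y : Ωe) : ℝ :=
  ∫ x, Real.exp (b * ∑ j ∈ Finset.Icc 1 n, η j (ω j x) y) ∂P



/-- The number of meetings of the two independent walks `ω, ω̃` up to time `n`. -/
noncomputable def Nn (ω : ℕ → ΩW → (Fin d → ℤ)) (n : ℕ) (z : ΩW × ΩW) : ℕ :=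
  ((Finset.Icc 1 n).filter fun t => ω t z.1 = ω t z.2).card

/-- The total number of meetings of the two walks (junk value `0` if infinite). -/
noncomputable def NinfReal (ω : ℕ → ΩW → (Fin d → ℤ)) (z : ΩW × ΩW) : ℝ :=
  ({t : ℕ | 1 ≤ t ∧ ω t z.1 = ω t z.2}.ncard : ℝ)

/-- The rescaled walk `(ω_n - b_n)/a_n` as an `ℝ^d`-valued random variable. -/
noncomputable def rescaled (ω : ℕ → ΩW → (Fin d → ℤ)) (an : ℕ → ℝ) (bn : ℕ → Fin d → ℝ)
    (n : ℕ) (x : ΩW) : Fin d → ℝ :=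
  fun i => ((ω n x i : ℝ) - bn n i) / an n

open Metric in
lemma _dummy_open_check : (0:ℝ) = 0 := rfl
open Metric

set_option linter.unusedSectionVars false
set_option maxHeartbeats 2000000

section LP

variable {α β : Type*} [MeasurableSpace α] [MeasurableSpace β]
  [PseudoMetricSpace α] [PseudoMetricSpace β]
  [OpensMeasurableSpace α] [OpensMeasurableSpace β]

/-- One-sided Ky Fan type estimate. -/
lemma measure_map_le_of_dist {Ω : Type*} [MeasurableSpace Ω] (μ : Measure Ω)
    {X Y : Ω → α} (hX : AEMeasurable X μ) (hY : AEMeasurable Y μ) {ε : ℝ} (hε : 0 < ε)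
    (h : μ {a | ε < dist (X a) (Y a)} ≤ ENNReal.ofReal ε)
    {ε' : ℝ≥0∞} {B : Set α} (hlt : ENNReal.ofReal ε < ε') (htop : ε' < ⊤)
    (hB : MeasurableSet B) :
    (μ.map X) B ≤ (μ.map Y) (thickening ε'.toReal B) + ε' := by
  rw [Measure.map_apply_of_aemeasurable hX hB,
    Measure.map_apply_of_aemeasurable hY isOpen_thickening.measurableSet]
  have hεε' : ε < ε'.toReal := by
    rw [← ENNReal.ofReal_lt_iff_lt_toReal hε.le htop.ne]
    exact hlt
  have hsub : X ⁻¹' B ⊆ (Y ⁻¹' (thickening ε'.toReal B)) ∪ {a | ε < dist (X a) (Y a)} := by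
    intro a ha
    by_cases hd : ε < dist (X a) (Y a)
    · exact Or.inr hd
    · refine Or.inl ?_
      rw [Set.mem_preimage, mem_thickening_iff]
      exact ⟨X a, ha, by rw [dist_comm]; exact lt_of_le_of_lt (not_lt.mp hd) hεε'⟩
  calc μ (X ⁻¹' B) ≤ μ ((Y ⁻¹' (thickening ε'.toReal B)) ∪ {a | ε < dist (X a) (Y a)}) :=
        measure_mono hsub
    _ ≤ μ (Y ⁻¹' (thickening ε'.toReal B)) + μ {a | ε < dist (X a) (Y a)} := measure_union_le _ _
    _ ≤ μ (Y ⁻¹' (thickening ε'.toReal B)) + ε' := by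
        exact add_le_add le_rfl (h.trans hlt.le)

/-- Ky Fan type estimate for the Lévy-Prokhorov distance of laws of two random variables
defined on the same probability space. -/
lemma levyProkhorovEDist_map_le_of_dist {Ω : Type*} [MeasurableSpace Ω] (μ : Measure Ω)
    {X Y : Ω → α} (hX : AEMeasurable X μ) (hY : AEMeasurable Y μ) {ε : ℝ} (hε : 0 < ε)
    (h : μ {a | ε < dist (X a) (Y a)} ≤ ENNReal.ofReal ε) :
    levyProkhorovEDist (μ.map X) (μ.map Y) ≤ ENNReal.ofReal ε := by
  apply levyProkhorovEDist_le_of_forall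
  intro ε' B hlt htop hB
  have h' : μ {a | ε < dist (Y a) (X a)} ≤ ENNReal.ofReal ε := by
    simpa [dist_comm] using h
  exact ⟨measure_map_le_of_dist μ hX hY hε h hlt htop hB,
    measure_map_le_of_dist μ hY hX hε h' hlt htop hB⟩

variable [SecondCountableTopology α] [SecondCountableTopology β]

lemma slice_thickening_subset (r : ℝ) (B : Set (α × β)) (x : α) :
    thickening r (Prod.mk x ⁻¹' B) ⊆ Prod.mk x ⁻¹' (thickening r B) := by
  intro y hy
  rw [mem_thickening_iff] at hy
  obtain ⟨z, hz, hdz⟩ := hy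
  rw [Set.mem_preimage, mem_thickening_iff]
  refine ⟨(x, z), hz, ?_⟩
  rw [Prod.dist_eq]
  simp only [dist_self]
  exact max_lt (lt_of_le_of_lt dist_nonneg hdz) hdz

lemma slice_thickening_subset' (r : ℝ) (B : Set (α × β)) (y : β) :
    thickening r ((fun x => (x, y)) ⁻¹' B) ⊆ (fun x => (x, y)) ⁻¹' (thickening r B) := by
  intro x hx
  rw [mem_thickening_iff] at hx
  obtain ⟨z, hz, hdz⟩ := hx
  rw [Set.mem_preimage, mem_thickening_iff]
  refine ⟨(z, y), hz, ?_⟩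
  rw [Prod.dist_eq]
  simp only [dist_self]
  exact max_lt hdz (lt_of_le_of_lt dist_nonneg hdz)

lemma prod_meas_le_of_lp_lt (μ : Measure α) [IsProbabilityMeasure μ]
    (ν ν' : Measure β) [IsProbabilityMeasure ν] [IsProbabilityMeasure ν']
    {ε : ℝ≥0∞} (hlt : levyProkhorovEDist ν ν' < ε) {B : Set (α × β)}
    (hB : MeasurableSet B) :
    (μ.prod ν) B ≤ (μ.prod ν') (thickening ε.toReal B) + ε := by
  rw [Measure.prod_apply hB,
    Measure.prod_apply (isOpen_thickening (δ := ε.toReal) (E := B)).measurableSet]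
  calc ∫⁻ x, ν (Prod.mk x ⁻¹' B) ∂μ
      ≤ ∫⁻ x, (ν' (Prod.mk x ⁻¹' (thickening ε.toReal B)) + ε) ∂μ := by
        apply lintegral_mono
        intro x
        refine le_trans (left_measure_le_of_levyProkhorovEDist_lt hlt
          (measurable_prodMk_left hB)) ?_
        exact add_le_add (measure_mono (slice_thickening_subset _ _ _)) le_rfl
    _ = ∫⁻ x, ν' (Prod.mk x ⁻¹' (thickening ε.toReal B)) ∂μ + ε := by
        rw [lintegral_add_right _ measurable_const, lintegral_const, measure_univ, mul_one]

lemma prod_meas_le_of_lp_lt' (μ μ' : Measure α) [IsProbabilityMeasure μ] [IsProbabilityMeasure μ']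
    (ν : Measure β) [IsProbabilityMeasure ν]
    {ε : ℝ≥0∞} (hlt : levyProkhorovEDist μ μ' < ε) {B : Set (α × β)}
    (hB : MeasurableSet B) :
    (μ.prod ν) B ≤ (μ'.prod ν) (thickening ε.toReal B) + ε := by
  rw [Measure.prod_apply_symm hB,
    Measure.prod_apply_symm (isOpen_thickening (δ := ε.toReal) (E := B)).measurableSet]
  calc ∫⁻ y, μ ((fun x => (x, y)) ⁻¹' B) ∂ν
      ≤ ∫⁻ y, (μ' ((fun x => (x, y)) ⁻¹' (thickening ε.toReal B)) + ε) ∂ν := by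
        apply lintegral_mono
        intro y
        refine le_trans (left_measure_le_of_levyProkhorovEDist_lt hlt
          (measurable_prodMk_right hB)) ?_
        exact add_le_add (measure_mono (slice_thickening_subset' _ _ _)) le_rfl
    _ = ∫⁻ y, μ' ((fun x => (x, y)) ⁻¹' (thickening ε.toReal B)) ∂ν + ε := by
        rw [lintegral_add_right _ measurable_const, lintegral_const, measure_univ, mul_one]

lemma levyProkhorovEDist_prod_right (μ : Measure α) [IsProbabilityMeasure μ]
    (ν ν' : Measure β) [IsProbabilityMeasure ν] [IsProbabilityMeasure ν'] :
    levyProkhorovEDist (μ.prod ν) (μ.prod ν') ≤ levyProkhorovEDist ν ν' := by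
  apply levyProkhorovEDist_le_of_forall
  intro ε B hlt htop hB
  refine ⟨prod_meas_le_of_lp_lt μ ν ν' hlt hB, prod_meas_le_of_lp_lt μ ν' ν ?_ hB⟩
  rwa [levyProkhorovEDist_comm]

lemma levyProkhorovEDist_prod_left (μ μ' : Measure α) [IsProbabilityMeasure μ]
    [IsProbabilityMeasure μ'] (ν : Measure β) [IsProbabilityMeasure ν] :
    levyProkhorovEDist (μ.prod ν) (μ'.prod ν) ≤ levyProkhorovEDist μ μ' := by
  apply levyProkhorovEDist_le_of_forall
  intro ε B hlt htop hB
  refine ⟨prod_meas_le_of_lp_lt' μ μ' ν hlt hB, prod_meas_le_of_lp_lt' μ' μ ν ?_ hB⟩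
  rwa [levyProkhorovEDist_comm]

lemma levyProkhorovEDist_prod_le (μ μ' : Measure α) [IsProbabilityMeasure μ]
    [IsProbabilityMeasure μ'] (ν ν' : Measure β) [IsProbabilityMeasure ν]
    [IsProbabilityMeasure ν'] :
    levyProkhorovEDist (μ.prod ν) (μ'.prod ν') ≤
      levyProkhorovEDist μ μ' + levyProkhorovEDist ν ν' := by
  calc levyProkhorovEDist (μ.prod ν) (μ'.prod ν')
      ≤ levyProkhorovEDist (μ.prod ν) (μ.prod ν') +
        levyProkhorovEDist (μ.prod ν') (μ'.prod ν') := levyProkhorovEDist_triangle _ _ _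
    _ ≤ levyProkhorovEDist ν ν' + levyProkhorovEDist μ μ' := by
        exact add_le_add (levyProkhorovEDist_prod_right μ ν ν')
          (levyProkhorovEDist_prod_left μ μ' ν')
    _ = _ := add_comm _ _

end LP


section Walk

variable {P : Measure ΩW} {ω : ℕ → ΩW → (Fin d → ℤ)} {q : (Fin d → ℤ) → ℝ}

/-- history of the walk up to time `K` -/
def histf (ω : ℕ → ΩW → (Fin d → ℤ)) (K : ℕ) (x : ΩW) : Fin (K+1) → Fin d → ℤ :=
  fun i => ω i x

lemma measurable_histf (hw : IsRandomWalk P ω q) (K : ℕ) : Measurable (histf ω K) :=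
  measurable_pi_lambda _ (fun i => hw.meas i)

lemma omega_eq_sum (hw : IsRandomWalk P ω q) (x : ΩW) (n : ℕ) :
    ω n x = ∑ t ∈ Finset.range n, (ω (t+1) x - ω t x) := by
  induction n with
  | zero => simp [hw.zero]
  | succ n ih => rw [Finset.sum_range_succ, ← ih]; abel

lemma measurable_incr (hw : IsRandomWalk P ω q) (t : ℕ) :
    Measurable (fun x => ω (t+1) x - ω t x) := by
  have : (fun x => ω (t+1) x - ω t x) =
      (fun p : (Fin d → ℤ) × (Fin d → ℤ) => p.1 - p.2) ∘ (fun x => (ω (t+1) x, ω t x)) := rfl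
  rw [this]
  exact (measurable_of_countable _).comp ((hw.meas (t+1)).prodMk (hw.meas t))

/-- The history up to time `K` is independent of the increment from `K` to `n`. -/
lemma indep_hist_incr (hw : IsRandomWalk P ω q) (K n : ℕ) (hKn : K ≤ n) :
    IndepFun (histf ω K) (fun x => ω n x - ω K x) P := by
  set Δ : ℕ → ΩW → (Fin d → ℤ) := fun t x => ω (t+1) x - ω t x with hΔ
  have hdisj : Disjoint (Finset.range K) (Finset.Ico K n) := by
    rw [Finset.disjoint_left]
    intro a ha hb
    rw [Finset.mem_range] at ha
    rw [Finset.mem_Ico] at hb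
    omega
  have base := hw.indep.indepFun_finset (Finset.range K) (Finset.Ico K n) hdisj
    (fun t => measurable_incr hw t)
  set φ : ((i : ↥(Finset.range K)) → Fin d → ℤ) → (Fin (K+1) → Fin d → ℤ) :=
    fun g i => ∑ t : ↥(Finset.range K), if (t : ℕ) < (i : ℕ) then g t else 0 with hφ
  set ψ : ((i : ↥(Finset.Ico K n)) → Fin d → ℤ) → (Fin d → ℤ) :=
    fun g => ∑ t : ↥(Finset.Ico K n), g t with hψ
  have heq1 : histf ω K = φ ∘ (fun a (i : ↥(Finset.range K)) => Δ i a) := by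
    funext x
    funext i
    have hiK : (i : ℕ) ≤ K := Nat.lt_succ_iff.mp i.isLt
    simp only [Function.comp_apply, hφ]
    rw [Finset.sum_coe_sort (Finset.range K) (fun t => if t < (i:ℕ) then Δ t x else 0),
      ← Finset.sum_filter]
    have hfil : (Finset.range K).filter (fun t => t < (i:ℕ)) = Finset.range i := by
      ext t
      simp only [Finset.mem_filter, Finset.mem_range]
      omega
    rw [hfil]
    exact omega_eq_sum hw x i
  have heq2 : (fun x => ω n x - ω K x) = ψ ∘ (fun a (i : ↥(Finset.Ico K n)) => Δ i a) := by
    funext x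
    simp only [Function.comp_apply, hψ]
    rw [Finset.sum_coe_sort (Finset.Ico K n) (fun t => Δ t x)]
    rw [Finset.sum_Ico_eq_sub _ hKn, omega_eq_sum hw x n, omega_eq_sum hw x K]
  rw [heq1, heq2]
  exact base.comp (measurable_of_countable φ) (measurable_of_countable ψ)

/-- `Nn` as a function of the two histories. -/
def NK (d K : ℕ) (p : (Fin (K+1) → Fin d → ℤ) × (Fin (K+1) → Fin d → ℤ)) : ℕ :=
  (Finset.univ.filter (fun i : Fin (K+1) => 1 ≤ (i : ℕ) ∧ p.1 i = p.2 i)).card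

lemma Nn_eq_NK (K : ℕ) (z : ΩW × ΩW) :
    Nn ω K z = NK d K (histf ω K z.1, histf ω K z.2) := by
  classical
  apply Finset.card_bij' (fun (t : ℕ) _ => (⟨t % (K+1), Nat.mod_lt _ (Nat.succ_pos K)⟩ : Fin (K+1)))
    (fun (i : Fin (K+1)) _ => (i : ℕ))
  · intro t ht
    simp only [Finset.mem_filter, Finset.mem_Icc] at ht
    have htK : t % (K+1) = t := Nat.mod_eq_of_lt (by omega)
    refine Finset.mem_filter.mpr ⟨Finset.mem_univ _, ?_⟩
    simp only [htK, histf]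
    exact ⟨by omega, ht.2⟩
  · intro i hi
    simp only [NK, Finset.mem_filter, Finset.mem_univ, true_and] at hi
    simp only [Finset.mem_filter, Finset.mem_Icc]
    have : (i : ℕ) ≤ K := Nat.lt_succ_iff.mp i.isLt
    exact ⟨⟨hi.1, this⟩, hi.2⟩
  · intro t ht
    simp only [Finset.mem_filter, Finset.mem_Icc] at ht
    simp [Nat.mod_eq_of_lt (show t < K+1 by omega)]
  · intro i hi
    simp [Nat.mod_eq_of_lt i.isLt]

lemma measurable_NnR (hw : IsRandomWalk P ω q) (K : ℕ) :
    Measurable (fun z : ΩW × ΩW => (Nn ω K z : ℝ)) := by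
  have : (fun z : ΩW × ΩW => (Nn ω K z : ℝ)) =
      (fun p => (NK d K p : ℝ)) ∘ (fun z => (histf ω K z.1, histf ω K z.2)) := by
    funext z
    simp only [Function.comp_apply, Nn_eq_NK]
  rw [this]
  exact (measurable_of_countable _).comp
    (((measurable_histf hw K).comp measurable_fst).prodMk
      ((measurable_histf hw K).comp measurable_snd))

/-- If the walks do not meet after time `K`, then `Nn n = Nn K` for `n ≥ K`. -/
lemma Nn_eq_of_no_meet {K n : ℕ} (hKn : K ≤ n) {z : ΩW × ΩW}
    (h : ∀ t, K < t → ω t z.1 ≠ ω t z.2) : Nn ω n z = Nn ω K z := by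
  unfold Nn
  congr 1
  ext t
  simp only [Finset.mem_filter, Finset.mem_Icc]
  constructor
  · rintro ⟨⟨h1, h2⟩, h3⟩
    refine ⟨⟨h1, ?_⟩, h3⟩
    by_contra hc
    exact h t (by omega) h3
  · rintro ⟨⟨h1, h2⟩, h3⟩
    exact ⟨⟨h1, by omega⟩, h3⟩

lemma Ninf_eq_of_no_meet {K : ℕ} {z : ΩW × ΩW}
    (h : ∀ t, K < t → ω t z.1 ≠ ω t z.2) : NinfReal ω z = (Nn ω K z : ℝ) := by
  have hset : {t : ℕ | 1 ≤ t ∧ ω t z.1 = ω t z.2} =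
      ↑((Finset.Icc 1 K).filter fun t => ω t z.1 = ω t z.2) := by
    ext t
    simp only [Set.mem_setOf_eq, Finset.coe_filter, Finset.mem_Icc, Set.mem_setOf_eq]
    constructor
    · rintro ⟨h1, h2⟩
      refine ⟨⟨h1, ?_⟩, h2⟩
      by_contra hc
      exact h t (by omega) h2
    · rintro ⟨⟨h1, _⟩, h2⟩
      exact ⟨h1, h2⟩
  rw [NinfReal, hset, Set.ncard_coe_finset]
  rfl

end Walk


section Lim

variable {P : Measure ΩW} {ω : ℕ → ΩW → (Fin d → ℤ)} {q : (Fin d → ℤ) → ℝ}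

lemma measurable_meet (hw : IsRandomWalk P ω q) (t : ℕ) :
    MeasurableSet {z : ΩW × ΩW | ω t z.1 = ω t z.2} := by
  have : {z : ΩW × ΩW | ω t z.1 = ω t z.2} =
      (fun z : ΩW × ΩW => (ω t z.1, ω t z.2)) ⁻¹'
        {p : (Fin d → ℤ) × (Fin d → ℤ) | p.1 = p.2} := rfl
  rw [this]
  exact (((hw.meas t).comp measurable_fst).prodMk ((hw.meas t).comp measurable_snd))
    ((Set.to_countable _).measurableSet)

lemma measurable_rescaled (hw : IsRandomWalk P ω q) (an : ℕ → ℝ) (bn : ℕ → Fin d → ℝ) (n : ℕ) :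
    Measurable (rescaled ω an bn n) := by
  have : rescaled ω an bn n =
      (fun v : Fin d → ℤ => (fun i => ((v i : ℝ) - bn n i) / an n)) ∘ ω n := rfl
  rw [this]
  exact (measurable_of_countable _).comp (hw.meas n)

/-- The set of trajectories meeting after time `K`. -/
def meetAfter (ω : ℕ → ΩW → (Fin d → ℤ)) (K : ℕ) : Set (ΩW × ΩW) :=
  {z | ∃ t, K < t ∧ ω t z.1 = ω t z.2}

lemma measurable_meetAfter (hw : IsRandomWalk P ω q) (K : ℕ) :
    MeasurableSet (meetAfter ω K) := by
  have : meetAfter ω K = ⋃ t, ⋃ (_ : K < t), {z : ΩW × ΩW | ω t z.1 = ω t z.2} := by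
    ext z
    simp [meetAfter]
  rw [this]
  exact MeasurableSet.iUnion fun t => MeasurableSet.iUnion fun _ => measurable_meet hw t

lemma meetAfter_tendsto_zero (hw : IsRandomWalk P ω q) [IsProbabilityMeasure P]
    (hfin : ∀ᵐ z ∂(P.prod P), {t : ℕ | 1 ≤ t ∧ ω t z.1 = ω t z.2}.Finite) :
    Tendsto (fun K => (P.prod P) (meetAfter ω K)) atTop (𝓝 0) := by
  have hanti : Antitone (meetAfter ω) := by
    intro K K' hKK' z hz
    obtain ⟨t, ht, hmeet⟩ := hz
    exact ⟨t, by omega, hmeet⟩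
  have hzero : (P.prod P) (⋂ K, meetAfter ω K) = 0 := by
    rw [measure_eq_zero_iff_ae_notMem]
    filter_upwards [hfin] with z hz
    intro hmem
    obtain ⟨m, hm⟩ := hz.bddAbove
    rw [Set.mem_iInter] at hmem
    obtain ⟨t, htm, hmeet⟩ := hmem m
    exact absurd (hm (⟨by omega, hmeet⟩ : t ∈ {t : ℕ | 1 ≤ t ∧ ω t z.1 = ω t z.2})) (by omega)
  have := tendsto_measure_iInter_atTop (μ := P.prod P)
    (fun K => (measurable_meetAfter hw K).nullMeasurableSet) hanti
    ⟨0, measure_ne_top _ _⟩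
  rw [hzero] at this
  exact this

/-- The probability that the two walks meet at time `n` tends to `0`. -/
lemma meet_prob_tendsto_zero (hw : IsRandomWalk P ω q) [IsProbabilityMeasure P]
    (hfin : ∀ᵐ z ∂(P.prod P), {t : ℕ | 1 ≤ t ∧ ω t z.1 = ω t z.2}.Finite) :
    Tendsto (fun n => (P.prod P) {z : ΩW × ΩW | ω n z.1 = ω n z.2}) atTop (𝓝 0) := by
  have hle : ∀ n : ℕ, 1 ≤ n → (P.prod P) {z : ΩW × ΩW | ω n z.1 = ω n z.2} ≤
      (P.prod P) (meetAfter ω (n - 1)) := by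
    intro n hn
    apply measure_mono
    intro z hz
    exact ⟨n, by omega, hz⟩
  have hcomp : Tendsto (fun n : ℕ => (P.prod P) (meetAfter ω (n - 1))) atTop (𝓝 0) :=
    (meetAfter_tendsto_zero hw hfin).comp (tendsto_sub_atTop_nat 1)
  apply tendsto_of_tendsto_of_tendsto_of_le_of_le' tendsto_const_nhds hcomp
  · exact Eventually.of_forall fun n => zero_le
  · rw [eventually_atTop]
    exact ⟨1, hle⟩

/-- Coordinates of a fixed-time value of a measurable `ℤ^d`-valued map exceed `L` with
vanishing probability as `L → ∞`. -/
lemma tail_prob_tendsto_zero [IsProbabilityMeasure P] {Y : ΩW → Fin d → ℤ}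
    (hY : Measurable Y) :
    Tendsto (fun L : ℕ => P {x | ∃ i, (L : ℝ) < |(Y x i : ℝ)|}) atTop (𝓝 0) := by
  have hmeas : ∀ L : ℕ, MeasurableSet {x | ∃ i, (L : ℝ) < |(Y x i : ℝ)|} := by
    intro L
    have : {x | ∃ i, (L : ℝ) < |(Y x i : ℝ)|} =
        Y ⁻¹' {v | ∃ i, (L : ℝ) < |(v i : ℝ)|} := rfl
    rw [this]
    exact hY ((Set.to_countable _).measurableSet)
  have hanti : Antitone (fun L : ℕ => {x | ∃ i, (L : ℝ) < |(Y x i : ℝ)|}) := by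
    intro L L' hLL' x hx
    obtain ⟨i, hi⟩ := hx
    exact ⟨i, lt_of_le_of_lt (by exact_mod_cast hLL') hi⟩
  have hzero : (⋂ L : ℕ, {x | ∃ i, (L : ℝ) < |(Y x i : ℝ)|}) = ∅ := by
    ext x
    simp only [Set.mem_iInter, Set.mem_setOf_eq, Set.mem_empty_iff_false, iff_false, not_forall]
    push_neg
    obtain ⟨L, hL⟩ := exists_nat_ge (∑ i, |(Y x i : ℝ)|)
    refine ⟨L, fun i => ?_⟩
    refine le_trans ?_ hL
    exact Finset.single_le_sum (f := fun i => |(Y x i : ℝ)|) (fun j _ => abs_nonneg _)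
      (Finset.mem_univ i)
  have := tendsto_measure_iInter_atTop (μ := P)
    (fun L => (hmeas L).nullMeasurableSet) hanti ⟨0, measure_ne_top _ _⟩
  rw [hzero] at this
  simpa [Function.comp_def] using this

/-- If the rescaled walk converges in distribution and the two walks a.s. meet only finitely
often, then the normalization `an` must tend to infinity. -/
lemma an_tendsto_atTop (hw : IsRandomWalk P ω q) [IsProbabilityMeasure P]
    (hfin : ∀ᵐ z ∂(P.prod P), {t : ℕ | 1 ≤ t ∧ ω t z.1 = ω t z.2}.Finite)
    {an : ℕ → ℝ} (han : ∀ n, 0 < an n) {bn : ℕ → Fin d → ℝ}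
    (ν : Measure (Fin d → ℝ)) [IsProbabilityMeasure ν]
    (hconv : ∀ f : BoundedContinuousFunction (Fin d → ℝ) ℝ,
      Tendsto (fun n : ℕ => ∫ x, f (rescaled ω an bn n x) ∂P) atTop (𝓝 (∫ v, f v ∂ν))) :
    Tendsto an atTop atTop := by
  classical
  by_contra hcon
  rw [tendsto_atTop_atTop] at hcon
  push_neg at hcon
  obtain ⟨M0, hM0⟩ := hcon
  set M : ℝ := max M0 1 with hM
  have hMpos : 0 < M := lt_of_lt_of_le one_pos (le_max_right _ _)
  -- choose a ball carrying most of the mass of ν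
  have hUnion : Tendsto (fun m : ℕ => ν (closedBall (0 : Fin d → ℝ) m)) atTop
      (𝓝 (ν (⋃ m : ℕ, closedBall (0 : Fin d → ℝ) m))) := by
    apply tendsto_measure_iUnion_atTop
    intro a b hab
    exact closedBall_subset_closedBall (by exact_mod_cast hab)
  have huniv : (⋃ m : ℕ, closedBall (0 : Fin d → ℝ) m) = Set.univ := by
    ext v
    simp only [Set.mem_iUnion, Set.mem_univ, iff_true, mem_closedBall]
    obtain ⟨m, hm⟩ := exists_nat_ge (dist v 0)
    exact ⟨m, hm⟩
  rw [huniv, measure_univ] at hUnion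
  have h341 : ENNReal.ofReal (3/4) < 1 := by
    rw [← ENNReal.ofReal_one]
    exact (ENNReal.ofReal_lt_ofReal_iff_of_nonneg (by norm_num)).mpr (by norm_num)
  obtain ⟨m, hm⟩ := (hUnion.eventually (eventually_gt_nhds h341)).exists
  set R : ℝ := (m : ℝ) + 1 with hR
  have hRpos : 0 < R := by positivity
  -- the bump function
  set gfun : (Fin d → ℝ) → ℝ := fun v => max 0 (min 1 (2 - dist v 0 / R)) with hgfun
  have hgcont : Continuous gfun :=
    continuous_const.max (continuous_const.min (continuous_const.sub
      ((continuous_id.dist continuous_const).div_const R)))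
  have hgnn : ∀ v, 0 ≤ gfun v := fun v => le_max_left _ _
  have hgle1 : ∀ v, gfun v ≤ 1 := fun v =>
    max_le (by norm_num) (min_le_left _ _)
  have hg1 : ∀ v, dist v 0 ≤ R → gfun v = 1 := by
    intro v hv
    have h2 : (1 : ℝ) ≤ 2 - dist v 0 / R := by
      have : dist v 0 / R ≤ 1 := (div_le_one hRpos).mpr hv
      linarith
    show (0 : ℝ) ⊔ (1 ⊓ (2 - dist v 0 / R)) = 1
    rw [inf_eq_left.mpr h2]
    exact sup_eq_right.mpr zero_le_one
  have hg0 : ∀ v, 2 * R < dist v 0 → gfun v = 0 := by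
    intro v hv
    have h2 : 2 - dist v 0 / R < 0 := by
      have : 2 < dist v 0 / R := by
        rw [lt_div_iff₀ hRpos]
        linarith
      linarith
    show (0 : ℝ) ⊔ (1 ⊓ (2 - dist v 0 / R)) = 0
    rw [inf_eq_right.mpr (by linarith : 2 - dist v 0 / R ≤ 1)]
    exact sup_eq_left.mpr h2.le
  set g : BoundedContinuousFunction (Fin d → ℝ) ℝ :=
    ⟨⟨gfun, hgcont⟩, ⟨2, fun x y => by
      have := hgnn x; have := hgle1 x; have := hgnn y; have := hgle1 y
      rw [Real.dist_eq]
      rw [abs_sub_le_iff]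
      constructor <;> linarith⟩⟩ with hg
  have hgapp : ∀ v, g v = gfun v := fun v => rfl
  -- lower bound for the limit
  have hνint : (3/4 : ℝ) ≤ ∫ v, g v ∂ν := by
    have hind : ∀ v, (closedBall (0 : Fin d → ℝ) m).indicator (fun _ => (1:ℝ)) v ≤ g v := by
      intro v
      by_cases hv : v ∈ closedBall (0 : Fin d → ℝ) m
      · rw [Set.indicator_of_mem hv, hgapp, hg1 v]
        rw [mem_closedBall] at hv
        rw [hR]
        linarith
      · rw [Set.indicator_of_notMem hv]
        exact hgnn v
    have h1 : ∫ v, (closedBall (0 : Fin d → ℝ) m).indicator (fun _ => (1:ℝ)) v ∂ν =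
        (ν (closedBall 0 m)).toReal := by
      rw [integral_indicator_const _ measurableSet_closedBall]
      simp [Measure.real]
    have h2 : (3/4 : ℝ) ≤ (ν (closedBall (0 : Fin d → ℝ) m)).toReal := by
      have := ENNReal.toReal_mono (measure_ne_top ν _) hm.le
      rwa [ENNReal.toReal_ofReal (by norm_num : (0:ℝ) ≤ 3/4)] at this
    calc (3/4 : ℝ) ≤ (ν (closedBall (0 : Fin d → ℝ) m)).toReal := h2
      _ = ∫ v, (closedBall (0 : Fin d → ℝ) m).indicator (fun _ => (1:ℝ)) v ∂ν := h1.symm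
      _ ≤ ∫ v, g v ∂ν := by
          apply integral_mono ((integrable_const (1:ℝ)).indicator measurableSet_closedBall)
            (g.integrable ν) hind
  -- eventually the walk is in a ball of radius 2R with probability > 1/2
  have hev : ∀ᶠ n in atTop,
      (1/2 : ℝ) < (P {x | dist (rescaled ω an bn n x) 0 ≤ 2 * R}).toReal := by
    have h12 : (1/2 : ℝ) < ∫ v, g v ∂ν := by linarith
    filter_upwards [(hconv g).eventually (eventually_gt_nhds h12)] with n hn
    refine lt_of_lt_of_le hn ?_
    have hind : ∀ x : ΩW, g (rescaled ω an bn n x) ≤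
        ({x : ΩW | dist (rescaled ω an bn n x) 0 ≤ 2 * R}).indicator (fun _ => (1:ℝ)) x := by
      intro x
      by_cases hx : dist (rescaled ω an bn n x) 0 ≤ 2 * R
      · have hxmem : x ∈ {x : ΩW | dist (rescaled ω an bn n x) 0 ≤ 2 * R} := hx
        rw [Set.indicator_of_mem hxmem]
        exact hgle1 _
      · have hxmem : x ∉ {x : ΩW | dist (rescaled ω an bn n x) 0 ≤ 2 * R} := hx
        rw [Set.indicator_of_notMem hxmem]
        rw [hgapp, hg0 _ (not_le.mp hx)]
    have hmeasset : MeasurableSet {x : ΩW | dist (rescaled ω an bn n x) 0 ≤ 2 * R} := by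
      have : {x : ΩW | dist (rescaled ω an bn n x) 0 ≤ 2 * R} =
          (rescaled ω an bn n) ⁻¹' (closedBall 0 (2*R)) := rfl
      rw [this]
      exact (measurable_rescaled hw an bn n) measurableSet_closedBall
    calc ∫ x, g (rescaled ω an bn n x) ∂P
        ≤ ∫ x, ({x : ΩW | dist (rescaled ω an bn n x) 0 ≤ 2 * R}).indicator
            (fun _ => (1:ℝ)) x ∂P := by
          apply integral_mono ?_ ((integrable_const (1:ℝ)).indicator hmeasset) hind
          have : (fun x => g (rescaled ω an bn n x)) = (g : (Fin d → ℝ) → ℝ) ∘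
              (rescaled ω an bn n) := rfl
          rw [this]
          apply Integrable.comp_measurable (g.integrable (P.map (rescaled ω an bn n)))
            (measurable_rescaled hw an bn n)
      _ = (P {x | dist (rescaled ω an bn n x) 0 ≤ 2 * R}).toReal := by
          rw [integral_indicator_const _ hmeasset]
          simp [Measure.real]
  -- pigeonhole: some lattice point carries definite mass
  set L : ℝ := 2 * R * M with hL
  have hLpos : 0 < L := by positivity
  set C0 : ℕ := (⌊2*L⌋ + 1).toNat with hC0
  have hC0pos : 0 < C0 := by
    have : (0:ℤ) ≤ ⌊2*L⌋ := Int.floor_nonneg.mpr (by positivity)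
    omega
  set Cd : ℕ := C0 ^ d with hCd
  have hCdpos : 0 < Cd := pow_pos hC0pos d
  set c0 : ℝ := 1 / (4 * Cd) with hc0
  have hc0pos : 0 < c0 := by
    rw [hc0]
    positivity
  have hpigeon : ∀ n : ℕ, an n < M →
      (1/2 : ℝ) < (P {x | dist (rescaled ω an bn n x) 0 ≤ 2 * R}).toReal →
      ∃ v : Fin d → ℤ, c0 ≤ (P {x | ω n x = v}).toReal := by
    intro n hanM hhalf
    set Fn : Finset (Fin d → ℤ) :=
      Fintype.piFinset (fun i => Finset.Icc ⌈bn n i - L⌉ ⌊bn n i + L⌋) with hFn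
    have hsub : {x | dist (rescaled ω an bn n x) 0 ≤ 2 * R} ⊆ {x | ω n x ∈ Fn} := by
      intro x hx
      simp only [Set.mem_setOf_eq] at hx ⊢
      rw [hFn, Fintype.mem_piFinset]
      intro i
      have hcoord : |rescaled ω an bn n x i| ≤ 2 * R := by
        have := (dist_pi_le_iff (by positivity : (0:ℝ) ≤ 2*R)).mp hx i
        rwa [Pi.zero_apply, Real.dist_eq, sub_zero] at this
      have hval : |(ω n x i : ℝ) - bn n i| ≤ L := by
        have hrw : (ω n x i : ℝ) - bn n i = rescaled ω an bn n x i * an n := by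
          show (ω n x i : ℝ) - bn n i = (((ω n x i : ℝ) - bn n i) / an n) * an n
          rw [div_mul_cancel₀ _ (han n).ne']
        rw [hrw, abs_mul, abs_of_pos (han n)]
        have h2R : (0:ℝ) ≤ 2*R := by positivity
        calc |rescaled ω an bn n x i| * an n ≤ (2*R) * M :=
              mul_le_mul hcoord hanM.le (han n).le h2R
          _ = L := by rw [hL]
      rw [abs_sub_le_iff] at hval
      rw [Finset.mem_Icc]
      constructor
      · rw [Int.ceil_le]
        push_cast
        linarith [hval.2]
      · rw [Int.le_floor]
        push_cast
        linarith [hval.1]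
    have hcardnat : Fn.card ≤ Cd := by
      rw [hFn, Fintype.card_piFinset, hCd]
      calc ∏ i, (Finset.Icc ⌈bn n i - L⌉ ⌊bn n i + L⌋).card
          ≤ ∏ _i : Fin d, C0 := by
            apply Finset.prod_le_prod'
            intro i _
            rw [Int.card_Icc, hC0]
            apply Int.toNat_le_toNat
            have h1 := Int.floor_le (bn n i + L)
            have h2 := Int.le_ceil (bn n i - L)
            have : ((⌊bn n i + L⌋ - ⌈bn n i - L⌉ : ℤ) : ℝ) ≤ 2 * L := by
              push_cast
              linarith
            have h3 : (⌊bn n i + L⌋ - ⌈bn n i - L⌉ : ℤ) ≤ ⌊2*L⌋ := Int.le_floor.mpr this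
            omega
        _ = C0 ^ d := by
            rw [Finset.prod_const, Finset.card_univ, Fintype.card_fin]
    have hdecomp : P {x | ω n x ∈ Fn} = ∑ v ∈ Fn, P {x | ω n x = v} := by
      have hun : {x | ω n x ∈ Fn} = ⋃ v ∈ Fn, {x | ω n x = v} := by
        ext x
        simp
      rw [hun, measure_biUnion_finset]
      · intro v hv w hw hvw
        rw [Function.onFun]
        rw [Set.disjoint_left]
        intro x hxv hxw
        exact hvw (hxv.symm.trans hxw)
      · intro v hv
        exact hw.meas n (measurableSet_singleton v)
    by_contra hno
    push_neg at hno
    have hfinmeas : ∀ v ∈ Fn, P {x | ω n x = v} ≠ ∞ := fun v _ => measure_ne_top _ _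
    have hsumle : (P {x | ω n x ∈ Fn}).toReal ≤ Fn.card * c0 := by
      rw [hdecomp, ENNReal.toReal_sum hfinmeas]
      calc ∑ v ∈ Fn, (P {x | ω n x = v}).toReal ≤ Fn.card • c0 :=
            Finset.sum_le_card_nsmul Fn _ c0 (fun v _ => (hno v).le)
        _ = Fn.card * c0 := nsmul_eq_mul _ _
    have hh : (1/2 : ℝ) < Cd * c0 := by
      calc (1/2 : ℝ) < (P {x | dist (rescaled ω an bn n x) 0 ≤ 2 * R}).toReal := hhalf
        _ ≤ (P {x | ω n x ∈ Fn}).toReal :=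
            ENNReal.toReal_mono (measure_ne_top _ _) (measure_mono hsub)
        _ ≤ Fn.card * c0 := hsumle
        _ ≤ Cd * c0 := by
            apply mul_le_mul_of_nonneg_right _ hc0pos.le
            exact_mod_cast hcardnat
    rw [hc0] at hh
    have hCdne : (Cd : ℝ) ≠ 0 := by positivity
    have : (Cd : ℝ) * (1 / (4 * Cd)) = 1/4 := by
      field_simp
    rw [this] at hh
    linarith
  have hfreq : ∃ᶠ n in atTop, an n < M := by
    rw [frequently_atTop]
    intro N
    obtain ⟨n, hn1, hn2⟩ := hM0 N
    exact ⟨n, hn1, lt_of_lt_of_le hn2 (le_max_left _ _)⟩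
  have hmeetlb : ∃ᶠ n in atTop,
      c0^2 ≤ ((P.prod P) {z : ΩW × ΩW | ω n z.1 = ω n z.2}).toReal := by
    apply (hfreq.and_eventually hev).mono
    rintro n ⟨h1, h2⟩
    obtain ⟨v, hv⟩ := hpigeon n h1 h2
    have hprodsub : ({x | ω n x = v} ×ˢ {x | ω n x = v} : Set (ΩW × ΩW)) ⊆
        {z : ΩW × ΩW | ω n z.1 = ω n z.2} := by
      rintro ⟨x, y⟩ ⟨hx, hy⟩
      exact hx.trans hy.symm
    calc c0^2 ≤ (P {x | ω n x = v}).toReal * (P {x | ω n x = v}).toReal := by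
          have h0 := ENNReal.toReal_nonneg (a := P {x | ω n x = v})
          nlinarith
      _ = ((P.prod P) ({x | ω n x = v} ×ˢ {x | ω n x = v})).toReal := by
          rw [Measure.prod_prod, ENNReal.toReal_mul]
      _ ≤ ((P.prod P) {z : ΩW × ΩW | ω n z.1 = ω n z.2}).toReal :=
          ENNReal.toReal_mono (measure_ne_top _ _) (measure_mono hprodsub)
  have hto0 : Tendsto (fun n => ((P.prod P) {z : ΩW × ΩW | ω n z.1 = ω n z.2}).toReal)
      atTop (𝓝 0) := by
    have h := meet_prob_tendsto_zero hw hfin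
    have := (ENNReal.tendsto_toReal (a := 0) (by simp)).comp h
    simpa [Function.comp_def] using this
  obtain ⟨n, hlb, hub⟩ := (hmeetlb.and_eventually
    (hto0.eventually (eventually_lt_nhds (by positivity : (0:ℝ) < c0^2)))).exists
  linarith

end Lim

section Law
variable {P : Measure ΩW} {ω : ℕ → ΩW → (Fin d → ℤ)} {q : (Fin d → ℤ) → ℝ}

/-- Under `P ⊗ P`, the number of meetings up to time `K` and the two post-`K` increments
at time `n ≥ K` (composed with any deterministic map `ρ`) are jointly independent. -/
lemma law_triple_prod (hw : IsRandomWalk P ω q) [IsProbabilityMeasure P] {K n : ℕ}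
    (hKn : K ≤ n) (ρ : (Fin d → ℤ) → (Fin d → ℝ)) :
    ((P.prod P).map (fun z : ΩW × ΩW => (Nn ω K z : ℝ))).prod
      ((P.map (fun x => ρ (ω n x - ω K x))).prod (P.map (fun x => ρ (ω n x - ω K x)))) =
    (P.prod P).map (fun z : ΩW × ΩW =>
      ((Nn ω K z : ℝ), (ρ (ω n z.1 - ω K z.1), ρ (ω n z.2 - ω K z.2)))) := by
  classical
  set X : ΩW → (Fin d → ℝ) := fun x => ρ (ω n x - ω K x) with hX
  have hXmeas : Measurable X := by
    have : X = (fun p : (Fin d → ℤ) × (Fin d → ℤ) => ρ (p.1 - p.2)) ∘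
        (fun x => (ω n x, ω K x)) := rfl
    rw [this]
    exact (measurable_of_countable _).comp ((hw.meas n).prodMk (hw.meas K))
  have hNmeas : Measurable (fun z : ΩW × ΩW => (Nn ω K z : ℝ)) := measurable_NnR hw K
  haveI : IsProbabilityMeasure (P.map X) := Measure.isProbabilityMeasure_map hXmeas.aemeasurable
  have hind : IndepFun (histf ω K) (fun x => ω n x - ω K x) P := indep_hist_incr hw K n hKn
  have hindX : IndepFun (histf ω K) X P := by
    have := hind.comp measurable_id (measurable_of_countable ρ)
    exact this
  apply Measure.prod_eq
  intro s t hs ht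
  have hXXmeas : Measurable (fun z : ΩW × ΩW => (X z.1, X z.2)) :=
    (hXmeas.comp measurable_fst).prodMk (hXmeas.comp measurable_snd)
  have hTmeas : Measurable (fun z : ΩW × ΩW =>
      ((Nn ω K z : ℝ), (X z.1, X z.2))) := hNmeas.prodMk hXXmeas
  rw [Measure.map_apply hTmeas (hs.prod ht)]
  have hpre : (fun z : ΩW × ΩW => ((Nn ω K z : ℝ), (X z.1, X z.2))) ⁻¹' (s ×ˢ t) =
      ((fun z : ΩW × ΩW => (Nn ω K z : ℝ)) ⁻¹' s) ∩
      ((fun z : ΩW × ΩW => (X z.1, X z.2)) ⁻¹' t) := by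
    ext z
    simp [Set.mem_prod]
  rw [hpre]
  have hA : MeasurableSet (((fun z : ΩW × ΩW => (Nn ω K z : ℝ)) ⁻¹' s) ∩
      ((fun z : ΩW × ΩW => (X z.1, X z.2)) ⁻¹' t)) :=
    (hNmeas hs).inter (hXXmeas ht)
  rw [Measure.prod_apply hA]
  -- the functions of one history
  set F : (Fin (K+1) → Fin d → ℤ) → ℝ≥0∞ :=
    fun h => P {y | (NK d K (h, histf ω K y) : ℝ) ∈ s} with hF
  set G : (Fin d → ℝ) → ℝ≥0∞ := fun v => (P.map X) {w | (v, w) ∈ t} with hG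
  have hGmeas : Measurable G := by
    have : G = fun v => (P.map X) (Prod.mk v ⁻¹' t) := rfl
    rw [this]
    exact measurable_measure_prodMk_left ht
  -- slice computation
  have hslice : ∀ x : ΩW, P (Prod.mk x ⁻¹' (((fun z : ΩW × ΩW => (Nn ω K z : ℝ)) ⁻¹' s) ∩
      ((fun z : ΩW × ΩW => (X z.1, X z.2)) ⁻¹' t))) = F (histf ω K x) * G (X x) := by
    intro x
    have hset : Prod.mk x ⁻¹' (((fun z : ΩW × ΩW => (Nn ω K z : ℝ)) ⁻¹' s) ∩
        ((fun z : ΩW × ΩW => (X z.1, X z.2)) ⁻¹' t)) =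
        (histf ω K ⁻¹' {h | (NK d K (histf ω K x, h) : ℝ) ∈ s}) ∩
        (X ⁻¹' {w | (X x, w) ∈ t}) := by
      ext y
      simp only [Set.mem_preimage, Set.mem_inter_iff, Set.mem_setOf_eq]
      rw [Nn_eq_NK (ω := ω) K (x, y)]
    rw [hset]
    rw [(indepFun_iff_measure_inter_preimage_eq_mul.mp hindX)
      {h | (NK d K (histf ω K x, h) : ℝ) ∈ s} {w | (X x, w) ∈ t}
      ((Set.to_countable _).measurableSet)
      (show MeasurableSet {w | (X x, w) ∈ t} from measurable_prodMk_left ht)]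
    congr 1
    exact (Measure.map_apply hXmeas
      (show MeasurableSet {w | (X x, w) ∈ t} from measurable_prodMk_left ht)).symm
  rw [lintegral_congr hslice]
  -- independence of the two factors of x
  have hFG : IndepFun (fun x => F (histf ω K x)) (fun x => G (X x)) P := by
    have := hind.comp (measurable_of_countable F)
      (hGmeas.comp (measurable_of_countable ρ))
    exact this
  have hmul : ∫⁻ x, F (histf ω K x) * G (X x) ∂P =
      (∫⁻ x, F (histf ω K x) ∂P) * ∫⁻ x, G (X x) ∂P := by
    have := lintegral_mul_eq_lintegral_mul_lintegral_of_indepFun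
      ((measurable_of_countable F).comp (measurable_histf hw K))
      (hGmeas.comp hXmeas) hFG
    simpa [Function.comp] using this
  rw [hmul]
  congr 1
  · rw [Measure.map_apply hNmeas hs, Measure.prod_apply (hNmeas hs)]
    refine lintegral_congr fun x => ?_
    have hseq : Prod.mk x ⁻¹' ((fun z : ΩW × ΩW => (Nn ω K z : ℝ)) ⁻¹' s) =
        {y | (NK d K (histf ω K x, histf ω K y) : ℝ) ∈ s} := by
      ext y
      simp only [Set.mem_preimage, Set.mem_setOf_eq]
      rw [Nn_eq_NK (ω := ω) K (x, y)]
    rw [hseq]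
  · rw [Measure.prod_apply ht, ← lintegral_map hGmeas hXmeas]
    exact lintegral_congr fun a => rfl

end Law

section Ninf
variable {P : Measure ΩW} {ω : ℕ → ΩW → (Fin d → ℤ)} {q : (Fin d → ℤ) → ℝ}

lemma aemeasurable_NinfReal (hw : IsRandomWalk P ω q) [IsProbabilityMeasure P]
    (hfin : ∀ᵐ z ∂(P.prod P), {t : ℕ | 1 ≤ t ∧ ω t z.1 = ω t z.2}.Finite) :
    AEMeasurable (NinfReal ω) (P.prod P) := by
  apply aemeasurable_of_tendsto_metrizable_ae' (f := fun K z => (Nn ω K z : ℝ))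
    (fun K => (measurable_NnR hw K).aemeasurable)
  filter_upwards [hfin] with z hz
  obtain ⟨m, hm⟩ := hz.bddAbove
  have hev : ∀ K, m ≤ K → (Nn ω K z : ℝ) = NinfReal ω z := by
    intro K hK
    refine (Ninf_eq_of_no_meet ?_).symm
    intro t ht hmeet
    exact absurd (hm (⟨by omega, hmeet⟩ : t ∈ {t : ℕ | 1 ≤ t ∧ ω t z.1 = ω t z.2})) (by omega)
  refine tendsto_const_nhds.congr' ?_
  rw [EventuallyEq, eventually_atTop]
  exact ⟨m, fun K hK => (hev K hK).symm⟩

end Ninf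

/-- Assume the two independent walks meet only finitely often `P^{⊗2}`-a.s., and that
`(ω_n - b_n)/a_n` converges in distribution to `ν`. Then, under `P^{⊗2}`, the triple
`(N_n, (ω_n - b_n)/a_n, (ω̃_n - b_n)/a_n)` converges in distribution to an independent
triple `(N, S, S̃)` where `N` has the law of `N_∞` and `S, S̃` have law `ν`. -/
theorem triple_convergence (P : Measure ΩW) [IsProbabilityMeasure P]
    (ω : ℕ → ΩW → (Fin d → ℤ)) (q : (Fin d → ℤ) → ℝ)
    (hw : IsRandomWalk P ω q)
    (hfin : ∀ᵐ z ∂(P.prod P), {t : ℕ | 1 ≤ t ∧ ω t z.1 = ω t z.2}.Finite)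
    (an : ℕ → ℝ) (han : ∀ n, 0 < an n) (bn : ℕ → Fin d → ℝ)
    (ν : Measure (Fin d → ℝ)) [IsProbabilityMeasure ν]
    (hconv : ∀ f : BoundedContinuousFunction (Fin d → ℝ) ℝ,
      Tendsto (fun n : ℕ => ∫ x, f (rescaled ω an bn n x) ∂P) atTop (𝓝 (∫ v, f v ∂ν))) :
    ∀ f : BoundedContinuousFunction (ℝ × (Fin d → ℝ) × (Fin d → ℝ)) ℝ,
      Tendsto (fun n : ℕ =>
          ∫ z, f ((Nn ω n z : ℝ), rescaled ω an bn n z.1, rescaled ω an bn n z.2)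
            ∂(P.prod P))
        atTop
        (𝓝 (∫ w, f w ∂(((P.prod P).map (NinfReal ω)).prod (ν.prod ν)))) := by
  classical
  have hSmeas : ∀ n, Measurable (rescaled ω an bn n) := fun n => measurable_rescaled hw an bn n
  have hNinf : AEMeasurable (NinfReal ω) (P.prod P) := aemeasurable_NinfReal hw hfin
  haveI hμN : IsProbabilityMeasure ((P.prod P).map (NinfReal ω)) := Measure.isProbabilityMeasure_map hNinf
  set T : ℕ → ΩW × ΩW → ℝ × (Fin d → ℝ) × (Fin d → ℝ) :=
    fun n z => ((Nn ω n z : ℝ), rescaled ω an bn n z.1, rescaled ω an bn n z.2) with hT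
  have hTmeas : ∀ n, Measurable (T n) := fun n =>
    (measurable_NnR hw n).prodMk (((hSmeas n).comp measurable_fst).prodMk
      ((hSmeas n).comp measurable_snd))
  have hanT : Tendsto an atTop atTop := an_tendsto_atTop hw hfin han ν hconv
  -- marginal Lévy-Prokhorov convergence
  haveI hSprob : ∀ n, IsProbabilityMeasure (P.map (rescaled ω an bn n)) :=
    fun n => Measure.isProbabilityMeasure_map (hSmeas n).aemeasurable
  have hLPν : Tendsto (fun n => levyProkhorovEDist (P.map (rescaled ω an bn n)) ν)
      atTop (𝓝 0) := by
    set PMn : ℕ → ProbabilityMeasure (Fin d → ℝ) :=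
      fun n => ⟨P.map (rescaled ω an bn n), hSprob n⟩ with hPMn
    set PMν : ProbabilityMeasure (Fin d → ℝ) := ⟨ν, inferInstance⟩ with hPMν
    have h1 : Tendsto PMn atTop (𝓝 PMν) := by
      rw [ProbabilityMeasure.tendsto_iff_forall_integral_tendsto]
      intro g
      have heq : ∀ n, ∫ v, g v ∂((PMn n) : Measure (Fin d → ℝ)) =
          ∫ x, g (rescaled ω an bn n x) ∂P := fun n =>
        integral_map (hSmeas n).aemeasurable g.continuous.measurable.aestronglyMeasurable
      simp only [heq]
      exact hconv g
    have h2 := ((LevyProkhorov.continuous_ofMeasure_probabilityMeasure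
        (Ω := Fin d → ℝ)).tendsto PMν).comp h1
    have h3 := tendsto_iff_dist_tendsto_zero.mp h2
    have h3' : Tendsto (fun n => levyProkhorovDist (P.map (rescaled ω an bn n)) ν)
        atTop (𝓝 0) := h3
    have h4 : ∀ n, levyProkhorovEDist (P.map (rescaled ω an bn n)) ν =
        ENNReal.ofReal (levyProkhorovDist (P.map (rescaled ω an bn n)) ν) := fun n =>
      (ENNReal.ofReal_toReal (levyProkhorovEDist_ne_top _ _)).symm
    simp only [h4]
    have := ENNReal.tendsto_ofReal h3'
    simpa using this
  -- main Lévy-Prokhorov convergence for the triples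
  have hmain : Tendsto (fun n => levyProkhorovEDist ((P.prod P).map (T n))
      (((P.prod P).map (NinfReal ω)).prod (ν.prod ν))) atTop (𝓝 0) := by
    rw [ENNReal.tendsto_nhds_zero]
    have key : ∀ δ : ℝ, 0 < δ → ∀ᶠ n in atTop,
        levyProkhorovEDist ((P.prod P).map (T n))
          (((P.prod P).map (NinfReal ω)).prod (ν.prod ν)) ≤ ENNReal.ofReal (6*δ) := by
      intro δ hδ
      obtain ⟨K, hK⟩ := ((meetAfter_tendsto_zero hw hfin).eventually
        (eventually_le_nhds (ENNReal.ofReal_pos.mpr (by linarith : (0:ℝ) < δ/3)))).exists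
      obtain ⟨L, hL⟩ := ((tail_prob_tendsto_zero (P := P) (hw.meas K)).eventually
        (eventually_le_nhds (ENNReal.ofReal_pos.mpr (by linarith : (0:ℝ) < δ/3)))).exists
      set bad : Set ΩW := {x | ∃ i, (L : ℝ) < |(ω K x i : ℝ)|} with hbaddef
      filter_upwards [eventually_ge_atTop K, hanT.eventually_ge_atTop ((L : ℝ)/δ),
        hLPν.eventually (eventually_le_nhds (ENNReal.ofReal_pos.mpr hδ))] with n hnK hanL hLPn
      set ρ : (Fin d → ℤ) → (Fin d → ℝ) := fun v i => ((v i : ℝ) - bn n i) / an n with hρ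
      set X : ΩW → (Fin d → ℝ) := fun x => ρ (ω n x - ω K x) with hXdef
      have hXmeas : Measurable X := by
        have hcomp : X = (fun p : (Fin d → ℤ) × (Fin d → ℤ) => ρ (p.1 - p.2)) ∘
            (fun x => (ω n x, ω K x)) := rfl
        rw [hcomp]
        exact (measurable_of_countable _).comp ((hw.meas n).prodMk (hw.meas K))
      haveI : IsProbabilityMeasure (P.map X) := Measure.isProbabilityMeasure_map hXmeas.aemeasurable
      haveI : IsProbabilityMeasure ((P.prod P).map (fun z : ΩW × ΩW => (Nn ω K z : ℝ))) :=
        Measure.isProbabilityMeasure_map (measurable_NnR hw K).aemeasurable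
      haveI : IsProbabilityMeasure ((P.prod P).map (T n)) :=
        Measure.isProbabilityMeasure_map (hTmeas n).aemeasurable
      set T' : ΩW × ΩW → ℝ × (Fin d → ℝ) × (Fin d → ℝ) :=
        fun z => ((Nn ω K z : ℝ), (ρ (ω n z.1 - ω K z.1), ρ (ω n z.2 - ω K z.2))) with hT'
      have hT'meas : Measurable T' := (measurable_NnR hw K).prodMk
        ((hXmeas.comp measurable_fst).prodMk (hXmeas.comp measurable_snd))
      haveI : IsProbabilityMeasure ((P.prod P).map T') :=
        Measure.isProbabilityMeasure_map hT'meas.aemeasurable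
      -- key coordinate distance estimate
      have hdistSX : ∀ x : ΩW, (∀ i, |(ω K x i : ℝ)| ≤ L) →
          dist (rescaled ω an bn n x) (ρ (ω n x - ω K x)) ≤ δ := by
        intro x hx
        rw [dist_pi_le_iff hδ.le]
        intro i
        rw [Real.dist_eq]
        have hXi : ρ (ω n x - ω K x) i = ((ω n x i : ℝ) - (ω K x i : ℝ) - bn n i) / an n := by
          show (((ω n x - ω K x) i : ℝ) - bn n i) / an n = _
          rw [Pi.sub_apply]
          push_cast
          ring_nf
        have hSi : rescaled ω an bn n x i = ((ω n x i : ℝ) - bn n i) / an n := rfl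
        rw [hSi, hXi, div_sub_div_same]
        have hnum : ((ω n x i : ℝ) - bn n i) - ((ω n x i : ℝ) - (ω K x i : ℝ) - bn n i) =
            (ω K x i : ℝ) := by ring
        rw [hnum, abs_div, abs_of_pos (han n), div_le_iff₀ (han n)]
        have hLδ : δ * ((L : ℝ)/δ) = L := by field_simp
        calc |(ω K x i : ℝ)| ≤ L := hx i
          _ = δ * ((L : ℝ)/δ) := hLδ.symm
          _ ≤ δ * an n := mul_le_mul_of_nonneg_left hanL hδ.le
      -- Bound 1: Ky Fan estimate between the two triples
      have hbound1 : levyProkhorovEDist ((P.prod P).map (T n)) ((P.prod P).map T') ≤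
          ENNReal.ofReal δ := by
        apply levyProkhorovEDist_map_le_of_dist (P.prod P) (hTmeas n).aemeasurable
          hT'meas.aemeasurable hδ
        have hsub : {z : ΩW × ΩW | δ < dist (T n z) (T' z)} ⊆
            meetAfter ω K ∪ {z : ΩW × ΩW | z.1 ∈ bad} ∪ {z : ΩW × ΩW | z.2 ∈ bad} := by
          intro z hz
          by_contra hnot
          simp only [Set.mem_union, not_or] at hnot
          obtain ⟨⟨hA, hB⟩, hC⟩ := hnot
          have hnomeet : ∀ t, K < t → ω t z.1 ≠ ω t z.2 := by
            intro t ht hmeet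
            exact hA ⟨t, ht, hmeet⟩
          have hNeq : Nn ω n z = Nn ω K z := Nn_eq_of_no_meet hnK hnomeet
          have h1 : ∀ i, |(ω K z.1 i : ℝ)| ≤ L := by
            intro i
            by_contra hcon
            exact hB ⟨i, not_le.mp hcon⟩
          have h2 : ∀ i, |(ω K z.2 i : ℝ)| ≤ L := by
            intro i
            by_contra hcon
            exact hC ⟨i, not_le.mp hcon⟩
          have hdd : dist (T n z) (T' z) ≤ δ := by
            have e1 : T n z = ((Nn ω n z : ℝ), rescaled ω an bn n z.1,
                rescaled ω an bn n z.2) := rfl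
            have e2 : T' z = ((Nn ω K z : ℝ), ρ (ω n z.1 - ω K z.1),
                ρ (ω n z.2 - ω K z.2)) := rfl
            rw [e1, e2, Prod.dist_eq, Prod.dist_eq]
            dsimp only
            apply max_le
            · rw [hNeq, dist_self]
              exact hδ.le
            · exact max_le (hdistSX z.1 h1) (hdistSX z.2 h2)
          exact absurd hz (not_lt.mpr hdd)
        calc (P.prod P) {z : ΩW × ΩW | δ < dist (T n z) (T' z)} ≤
            (P.prod P) (meetAfter ω K ∪ {z : ΩW × ΩW | z.1 ∈ bad} ∪
              {z : ΩW × ΩW | z.2 ∈ bad}) := measure_mono hsub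
          _ ≤ (P.prod P) (meetAfter ω K) + (P.prod P) {z : ΩW × ΩW | z.1 ∈ bad} +
              (P.prod P) {z : ΩW × ΩW | z.2 ∈ bad} :=
              le_trans (measure_union_le _ _) (add_le_add (measure_union_le _ _) le_rfl)
          _ ≤ ENNReal.ofReal (δ/3) + ENNReal.ofReal (δ/3) + ENNReal.ofReal (δ/3) := by
              refine add_le_add (add_le_add hK ?_) ?_
              · have hset : {z : ΩW × ΩW | z.1 ∈ bad} = bad ×ˢ Set.univ := by
                  ext z
                  simp [Set.mem_prod]
                rw [hset, Measure.prod_prod, measure_univ, mul_one]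
                exact hL
              · have hset : {z : ΩW × ΩW | z.2 ∈ bad} = Set.univ ×ˢ bad := by
                  ext z
                  simp [Set.mem_prod]
                rw [hset, Measure.prod_prod, measure_univ, one_mul]
                exact hL
          _ = ENNReal.ofReal δ := by
              rw [← ENNReal.ofReal_add (by linarith) (by linarith),
                ← ENNReal.ofReal_add (by linarith) (by linarith)]
              congr 1
              ring
      -- Bound 2: between N_K and N_∞
      have hboundN : levyProkhorovEDist ((P.prod P).map (fun z : ΩW × ΩW => (Nn ω K z : ℝ)))
          ((P.prod P).map (NinfReal ω)) ≤ ENNReal.ofReal δ := by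
        apply levyProkhorovEDist_map_le_of_dist (P.prod P)
          (measurable_NnR hw K).aemeasurable hNinf hδ
        have hsub : {z : ΩW × ΩW | δ < dist ((Nn ω K z : ℝ)) (NinfReal ω z)} ⊆
            meetAfter ω K := by
          intro z hz
          by_contra hA
          have hnomeet : ∀ t, K < t → ω t z.1 ≠ ω t z.2 := by
            intro t ht hmeet
            exact hA ⟨t, ht, hmeet⟩
          have heq := Ninf_eq_of_no_meet (ω := ω) hnomeet
          rw [Set.mem_setOf_eq, heq, dist_self] at hz
          exact absurd hz (by linarith)
        exact le_trans (le_trans (measure_mono hsub) hK)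
          (ENNReal.ofReal_le_ofReal (by linarith))
      -- Bound 3: between the law of X and ν
      have hboundX : levyProkhorovEDist (P.map X) ν ≤
          ENNReal.ofReal δ + ENNReal.ofReal δ := by
        calc levyProkhorovEDist (P.map X) ν ≤
            levyProkhorovEDist (P.map X) (P.map (rescaled ω an bn n)) +
            levyProkhorovEDist (P.map (rescaled ω an bn n)) ν :=
              levyProkhorovEDist_triangle _ _ _
          _ ≤ ENNReal.ofReal δ + ENNReal.ofReal δ := by
              refine add_le_add ?_ hLPn
              apply levyProkhorovEDist_map_le_of_dist P hXmeas.aemeasurable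
                (hSmeas n).aemeasurable hδ
              have hsub : {x : ΩW | δ < dist (X x) (rescaled ω an bn n x)} ⊆ bad := by
                intro x hx
                by_contra hxbad
                have h1 : ∀ i, |(ω K x i : ℝ)| ≤ L := by
                  intro i
                  by_contra hcon
                  exact hxbad ⟨i, not_le.mp hcon⟩
                have hxd := hdistSX x h1
                rw [Set.mem_setOf_eq, dist_comm] at hx
                exact absurd hx (not_lt.mpr hxd)
              exact le_trans (le_trans (measure_mono hsub) hL)
                (ENNReal.ofReal_le_ofReal (by linarith))
      -- assemble everything
      have hprod := law_triple_prod hw hnK ρ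
      have htri : levyProkhorovEDist ((P.prod P).map (T n))
            (((P.prod P).map (NinfReal ω)).prod (ν.prod ν)) ≤
          levyProkhorovEDist ((P.prod P).map (T n)) ((P.prod P).map T') +
            levyProkhorovEDist ((P.prod P).map T')
              (((P.prod P).map (NinfReal ω)).prod (ν.prod ν)) :=
        levyProkhorovEDist_triangle _ _ _
      have hsecond : levyProkhorovEDist ((P.prod P).map T')
            (((P.prod P).map (NinfReal ω)).prod (ν.prod ν)) ≤
          ENNReal.ofReal δ + ((ENNReal.ofReal δ + ENNReal.ofReal δ) +
            (ENNReal.ofReal δ + ENNReal.ofReal δ)) := by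
        rw [hT', ← hprod]
        refine le_trans (levyProkhorovEDist_prod_le _ _ _ _) ?_
        refine add_le_add hboundN ?_
        refine le_trans (levyProkhorovEDist_prod_le _ _ _ _) ?_
        exact add_le_add hboundX hboundX
      refine le_trans htri ?_
      refine le_trans (add_le_add hbound1 hsecond) ?_
      rw [show (6:ℝ)*δ = δ + (δ + ((δ + δ) + (δ + δ))) by ring]
      rw [ENNReal.ofReal_add hδ.le (by positivity),
        ENNReal.ofReal_add hδ.le (by positivity),
        ENNReal.ofReal_add (by positivity) (by positivity),
        ENNReal.ofReal_add hδ.le hδ.le]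
    intro ε hε
    by_cases hεtop : ε = ⊤
    · exact Eventually.of_forall (fun n => hεtop ▸ le_top)
    · have hδ : 0 < ε.toReal/6 := by
        have := ENNReal.toReal_pos hε.ne' hεtop
        positivity
      refine (key (ε.toReal/6) hδ).mono fun n hn => le_trans hn ?_
      rw [show 6*(ε.toReal/6) = ε.toReal by ring, ENNReal.ofReal_toReal hεtop]
  -- convert Lévy-Prokhorov convergence to convergence in distribution
  haveI : ∀ n, IsProbabilityMeasure ((P.prod P).map (T n)) :=
    fun n => Measure.isProbabilityMeasure_map (hTmeas n).aemeasurable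
  set PMn : ℕ → ProbabilityMeasure (ℝ × (Fin d → ℝ) × (Fin d → ℝ)) :=
    fun n => ⟨(P.prod P).map (T n), inferInstance⟩ with hPMn
  set PMinf : ProbabilityMeasure (ℝ × (Fin d → ℝ) × (Fin d → ℝ)) :=
    ⟨((P.prod P).map (NinfReal ω)).prod (ν.prod ν), inferInstance⟩ with hPMinf
  have hdist0 : Tendsto (fun n =>
      dist (LevyProkhorov.toMeasureEquiv.symm (PMn n)) (LevyProkhorov.toMeasureEquiv.symm PMinf))
      atTop (𝓝 0) := by
    have heq : ∀ n, dist (LevyProkhorov.toMeasureEquiv.symm (PMn n))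
        (LevyProkhorov.toMeasureEquiv.symm PMinf) =
        (levyProkhorovEDist ((P.prod P).map (T n))
          (((P.prod P).map (NinfReal ω)).prod (ν.prod ν))).toReal := fun n => rfl
    simp only [heq]
    have := (ENNReal.tendsto_toReal (a := 0) (by simp)).comp hmain
    simpa [Function.comp_def] using this
  have hLPtend : Tendsto (fun n => LevyProkhorov.toMeasureEquiv.symm (PMn n)) atTop
      (𝓝 (LevyProkhorov.toMeasureEquiv.symm PMinf)) := tendsto_iff_dist_tendsto_zero.mpr hdist0
  have hPM : Tendsto PMn atTop (𝓝 PMinf) := by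
    have hcont := (LevyProkhorov.continuous_toMeasure_probabilityMeasure
      (Ω := ℝ × (Fin d → ℝ) × (Fin d → ℝ))).tendsto (LevyProkhorov.toMeasureEquiv.symm PMinf)
    have := hcont.comp hLPtend
    exact this
  rw [ProbabilityMeasure.tendsto_iff_forall_integral_tendsto] at hPM
  intro f
  have hf := hPM f
  have heqn : ∀ n, ∫ w, f w ∂((PMn n) : Measure (ℝ × (Fin d → ℝ) × (Fin d → ℝ))) =
      ∫ z, f ((Nn ω n z : ℝ), rescaled ω an bn n z.1, rescaled ω an bn n z.2) ∂(P.prod P) :=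
    fun n => integral_map (hTmeas n).aemeasurable f.continuous.measurable.aestronglyMeasurable
  simp only [heqn] at hf
  exact hf



end StablePolymer
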